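/- Let C be a commutative ring, y ∈ C, n a natural number, a_1, …, a_n ∈ C, and 0 ≤ k ≤ n. Then e_{n−k}(a_1, …, a_n) = Σ_{i=0}^{n−k} (−1)^i · C(k+i, i) · y^i · e_{n−k−i}(a_1 + y, …, a_n + y), where C(k+i, i) denotes the binomial coefficient. -/

import Mathlib

/-- The m-th elementary symmetric polynomial of a_1, …, a_n (with e_0 = 1). -/
def esym {C : Type*} [CommRing C] {n : ℕ} (m : ℕ) (a : Fin n → C) : C :=
  ∑ s ∈ Finset.univ.powersetCard m, ∏ j ∈ s, a j

lemma card_supersets {α : Type*} [Fintype α] [DecidableEq α] {m : ℕ} {t : Finset α}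
    (h : t.card ≤ m) :
    ((Finset.univ.powersetCard m).filter (fun s => t ⊆ s)).card
      = Nat.choose (Fintype.card α - t.card) (m - t.card) := by
  rw [← Finset.card_compl t, ← Finset.card_powersetCard]
  apply Finset.card_nbij' (i := fun s => s \ t) (j := fun u => u ∪ t)
  · intro s hs
    simp only [Finset.mem_coe, Finset.mem_filter, Finset.mem_powersetCard_univ] at hs
    simp only [Finset.mem_coe, Finset.mem_powersetCard]
    exact ⟨fun x hx => by simp only [Finset.mem_compl]; exact (Finset.mem_sdiff.mp hx).2,
      by rw [Finset.card_sdiff_of_subset hs.2, hs.1]⟩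
  · intro u hu
    simp only [Finset.mem_coe, Finset.mem_powersetCard] at hu
    have hdisj : Disjoint u t := by
      rw [Finset.disjoint_left]; intro x hx
      have := hu.1 hx; simp only [Finset.mem_compl] at this; exact this
    simp only [Finset.mem_coe, Finset.mem_filter, Finset.mem_powersetCard_univ]
    constructor
    · rw [Finset.card_union_of_disjoint hdisj, hu.2]
      omega
    · exact Finset.subset_union_right
  · intro s hs
    simp only [Finset.mem_coe, Finset.mem_filter] at hs
    exact Finset.sdiff_union_of_subset hs.2
  · intro u hu
    simp only [Finset.mem_coe, Finset.mem_powersetCard] at hu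
    have hdisj : Disjoint u t := by
      rw [Finset.disjoint_left]; intro x hx
      have := hu.1 hx; simp only [Finset.mem_compl] at this; exact this
    exact Finset.union_sdiff_cancel_right hdisj

lemma card_supersets_zero {α : Type*} [Fintype α] [DecidableEq α] {m : ℕ} {t : Finset α}
    (h : m < t.card) :
    ((Finset.univ.powersetCard m).filter (fun s => t ⊆ s)).card = 0 := by
  rw [Finset.card_eq_zero, Finset.filter_eq_empty_iff]
  intro s hs
  rw [Finset.mem_powersetCard_univ] at hs
  intro hts
  have := Finset.card_le_card hts
  omega

/-- for a commutative ring C, y ∈ C, a_1, …, a_n ∈ C and 0 ≤ k ≤ n,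
e_{n−k}(a_1, …, a_n) = Σ_{i=0}^{n−k} (−1)^i · C(k+i, i) · y^i · e_{n−k−i}(a_1 + y, …, a_n + y). -/
theorem stmt_10 {C : Type*} [CommRing C] (y : C) (n : ℕ) (a : Fin n → C) (k : ℕ)
    (hk : k ≤ n) :
    esym (n - k) a =
      ∑ i ∈ Finset.range (n - k + 1),
        (-1 : C) ^ i * (Nat.choose (k + i) i : C) * y ^ i *
          esym (n - k - i) (fun j => a j + y) := by
  classical
  set m := n - k with hm
  set b : Fin n → C := fun j => a j + y with hb
  have key : esym m a =
      ∑ t ∈ (Finset.univ : Finset (Fin n)).powerset,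
        (((Finset.univ.powersetCard m).filter (fun s => t ⊆ s)).card : C) *
          ((∏ j ∈ t, b j) * (-y) ^ (m - t.card)) := by
    have step1 : esym m a =
        ∑ s ∈ Finset.univ.powersetCard m, ∑ t ∈ s.powerset,
          (∏ j ∈ t, b j) * (-y) ^ (m - t.card) := by
      unfold esym
      refine Finset.sum_congr rfl fun s hs => ?_
      rw [Finset.mem_powersetCard_univ] at hs
      rw [show (∏ j ∈ s, a j) = ∏ j ∈ s, (b j + (-y)) from
        Finset.prod_congr rfl fun j _ => by simp [hb], Finset.prod_add]
      refine Finset.sum_congr rfl fun t ht => ?_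
      rw [Finset.mem_powerset] at ht
      rw [Finset.prod_const, Finset.card_sdiff_of_subset ht, hs]
    rw [step1]
    rw [Finset.sum_comm'
      (t' := (Finset.univ : Finset (Fin n)).powerset)
      (s' := fun t => (Finset.univ.powersetCard m).filter (fun s => t ⊆ s))
      (fun s t => by
        simp only [Finset.mem_powerset, Finset.mem_filter, Finset.mem_powersetCard_univ]
        constructor
        · rintro ⟨h1, h2⟩; exact ⟨⟨h1, h2⟩, Finset.subset_univ _⟩
        · rintro ⟨⟨h1, h2⟩, _⟩; exact ⟨h1, h2⟩)]
    refine Finset.sum_congr rfl fun t _ => ?_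
    rw [Finset.sum_const, nsmul_eq_mul]
  rw [key, Finset.sum_powerset]
  have hcard : (Finset.univ : Finset (Fin n)).card = n := by simp
  rw [hcard]
  have hsplit : ∀ r ∈ Finset.range (n + 1),
      (∑ t ∈ Finset.univ.powersetCard r,
        (((Finset.univ.powersetCard m).filter (fun s => t ⊆ s)).card : C) *
          ((∏ j ∈ t, b j) * (-y) ^ (m - t.card)))
      = if r ≤ m then
          (-1 : C) ^ (m - r) * (Nat.choose (k + (m - r)) (m - r) : C) * y ^ (m - r) *
            esym r b
        else 0 := by
    intro r hr
    rw [Finset.mem_range] at hr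
    split_ifs with hrm
    · have heach : ∀ t ∈ Finset.univ.powersetCard r,
          (((Finset.univ.powersetCard m).filter (fun s => t ⊆ s)).card : C) *
            ((∏ j ∈ t, b j) * (-y) ^ (m - t.card))
          = ((Nat.choose (k + (m - r)) (m - r) : C)) * ((-1 : C) ^ (m - r) * y ^ (m - r))
              * (∏ j ∈ t, b j) := by
        intro t ht
        rw [Finset.mem_powersetCard_univ] at ht
        have hc := card_supersets (m := m) (t := t) (by omega)
        have hcard' : Fintype.card (Fin n) = n := by simp
        rw [ht, hcard'] at hc
        have heq : n - r = k + (m - r) := by omega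
        rw [hc, ht, heq, neg_pow]
        ring
      rw [Finset.sum_congr rfl heach, ← Finset.mul_sum]
      unfold esym
      ring
    · apply Finset.sum_eq_zero
      intro t ht
      rw [Finset.mem_powersetCard_univ] at ht
      rw [card_supersets_zero (by omega)]
      simp
  rw [Finset.sum_congr rfl hsplit, ← Finset.sum_filter]
  have hfilter : (Finset.range (n + 1)).filter (fun r => r ≤ m) = Finset.range (m + 1) := by
    ext r
    simp only [Finset.mem_filter, Finset.mem_range]
    omega
  rw [hfilter]
  have hrefl := Finset.sum_range_reflect
    (fun i => (-1 : C) ^ i * (Nat.choose (k + i) i : C) * y ^ i * esym (m - i) b) (m + 1)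
  simp only [Nat.add_sub_cancel] at hrefl
  rw [← hrefl]
  refine Finset.sum_congr rfl fun r hr => ?_
  rw [Finset.mem_range] at hr
  have : m - (m - r) = r := by omega
  rw [this]
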